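/- A tropicalized frieze pattern on the strip ℤ × {1, ..., n} with the rule f(i,j) + f(i+1,j) = max(f(i+1,j-1) + f(i,j+1), 0) (boundary zero) is uniquely determined by its values on one diagonal: if f and g both satisfy the rule and f(0, j) = g(0, j) for all 1 ≤ j ≤ n, then f = g. -/

import Mathlib

theorem tropical_frieze_determined_by_diagonal (n : ℕ) (f g : ℤ × ℤ → ℤ)
    (hfb0 : ∀ i : ℤ, f (i, 0) = 0) (hfb1 : ∀ i : ℤ, f (i, (n : ℤ) + 1) = 0)
    (hgb0 : ∀ i : ℤ, g (i, 0) = 0) (hgb1 : ∀ i : ℤ, g (i, (n : ℤ) + 1) = 0)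
    (hfrule : ∀ i j : ℤ, 1 ≤ j → j ≤ (n : ℤ) →
      f (i, j) + f (i + 1, j) = max (f (i + 1, j - 1) + f (i, j + 1)) 0)
    (hgrule : ∀ i j : ℤ, 1 ≤ j → j ≤ (n : ℤ) →
      g (i, j) + g (i + 1, j) = max (g (i + 1, j - 1) + g (i, j + 1)) 0)
    (hdiag : ∀ j : ℤ, 1 ≤ j → j ≤ (n : ℤ) → f (0, j) = g (0, j)) :
    ∀ i j : ℤ, 1 ≤ j → j ≤ (n : ℤ) → f (i, j) = g (i, j) := by
  have step1 : ∀ i : ℤ, (∀ j, 1 ≤ j → j ≤ (n : ℤ) → f (i, j) = g (i, j)) →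
      ∀ j, 1 ≤ j → j ≤ (n : ℤ) → f (i + 1, j) = g (i + 1, j) := by
    intro i h
    have key : ∀ k : ℕ, ∀ j : ℤ, j = (k : ℤ) + 1 → j ≤ (n : ℤ) →
        f (i + 1, j) = g (i + 1, j) := by
      intro k
      induction k using Nat.strong_induction_on with
      | _ k ih =>
        intro j hj hjn
        have h1 : (1 : ℤ) ≤ j := by omega
        have hf := hfrule i j h1 hjn
        have hg := hgrule i j h1 hjn
        have e1 : f (i + 1, j - 1) = g (i + 1, j - 1) := by
          rcases eq_or_lt_of_le h1 with h' | h'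
          · rw [show j - 1 = (0 : ℤ) by omega, hfb0, hgb0]
          · exact ih (k - 1) (by omega) (j - 1) (by omega) (by omega)
        have e2 : f (i, j + 1) = g (i, j + 1) := by
          rcases eq_or_lt_of_le hjn with h' | h'
          · rw [h', hfb1, hgb1]
          · exact h (j + 1) (by omega) (by omega)
        have e3 := h j h1 hjn
        rw [e1, e2, e3] at hf
        omega
    intro j h1 hn
    exact key (j - 1).toNat j (by omega) hn
  have step2 : ∀ i : ℤ, (∀ j, 1 ≤ j → j ≤ (n : ℤ) → f (i, j) = g (i, j)) →
      ∀ j, 1 ≤ j → j ≤ (n : ℤ) → f (i - 1, j) = g (i - 1, j) := by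
    intro i h
    have key : ∀ k : ℕ, ∀ j : ℤ, j = (n : ℤ) - (k : ℤ) → 1 ≤ j →
        f (i - 1, j) = g (i - 1, j) := by
      intro k
      induction k using Nat.strong_induction_on with
      | _ k ih =>
        intro j hj h1
        have hjn : j ≤ (n : ℤ) := by omega
        have hf := hfrule (i - 1) j h1 hjn
        have hg := hgrule (i - 1) j h1 hjn
        rw [show i - 1 + 1 = i by ring] at hf hg
        have e1 : f (i, j - 1) = g (i, j - 1) := by
          rcases eq_or_lt_of_le h1 with h' | h'
          · rw [show j - 1 = (0 : ℤ) by omega, hfb0, hgb0]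
          · exact h (j - 1) (by omega) (by omega)
        have e2 : f (i - 1, j + 1) = g (i - 1, j + 1) := by
          rcases eq_or_lt_of_le hjn with h' | h'
          · rw [h', hfb1, hgb1]
          · exact ih (k - 1) (by omega) (j + 1) (by omega) (by omega)
        have e3 := h j h1 hjn
        rw [e1, e2, e3] at hf
        omega
    intro j h1 hn
    exact key ((n : ℤ) - j).toNat j (by omega) h1
  intro i
  induction i using Int.induction_on with
  | zero => exact hdiag
  | succ i ih => exact step1 i ih
  | pred i ih =>
    have := step2 (-(i : ℤ)) ih
    intro j h1 hn
    exact this j h1 hn
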